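/- For r ≥ 3 and k ≥ 1, if G is a K_{1,r}-free graph and H is an induced subgraph of G with chromatic number at most k, then the order of H is at most (r-1)·k·γ(G). -/

import Mathlib

open Finset

variable {V : Type*}

/-- A finset is independent in `G` : no two of its vertices are adjacent. -/
def IsIndepFinset (G : SimpleGraph V) (S : Finset V) : Prop :=
  ∀ u ∈ S, ∀ v ∈ S, ¬ G.Adj u v

/-- A finset dominates `G` : every vertex outside it has a neighbour inside it. -/
def IsDomFinset (G : SimpleGraph V) (D : Finset V) : Prop :=
  ∀ v, v ∉ D → ∃ u ∈ D, G.Adj u v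

/-- The independence number of `G`. -/
noncomputable def indepNum [Fintype V] (G : SimpleGraph V) : ℕ :=
  sSup {n | ∃ S : Finset V, IsIndepFinset G S ∧ S.card = n}

/-- The domination number of `G`. -/
noncomputable def domNum [Fintype V] (G : SimpleGraph V) : ℕ :=
  sInf {n | ∃ D : Finset V, IsDomFinset G D ∧ D.card = n}

/-- `G` is `K_{1,r}`-free: no vertex has `r` pairwise nonadjacent neighbours. -/
def K1rFree (G : SimpleGraph V) (r : ℕ) : Prop :=
  ¬ ∃ (v : V) (A : Finset V), (∀ a ∈ A, G.Adj v a) ∧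
      (∀ a ∈ A, ∀ b ∈ A, a ≠ b → ¬ G.Adj a b) ∧ A.card = r

/-- For r ≥ 3, k ≥ 1, in a K_{1,r}-free graph any induced subgraph with
chromatic number at most k has order at most (r-1)·k·γ(G). -/
theorem stmt2 [Fintype V] (G : SimpleGraph V) (r k : ℕ) (hr : 3 ≤ r) (hk : 1 ≤ k)
    (hG : K1rFree G r) (X : Finset V) (hX : (G.induce (X : Set V)).Colorable k) :
    X.card ≤ (r - 1) * k * domNum G := by
  classical
  have hmem : (domNum G) ∈ {n | ∃ D : Finset V, IsDomFinset G D ∧ D.card = n} := by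
    apply Nat.sInf_mem
    exact ⟨(Finset.univ : Finset V).card, Finset.univ,
      fun v hv => absurd (Finset.mem_univ v) hv, rfl⟩
  obtain ⟨D, hD, hDcard⟩ := hmem
  obtain ⟨C⟩ := hX
  set col : V → ℕ := fun x => if h : x ∈ X then (C ⟨x, Finset.mem_coe.mpr h⟩ : ℕ) else 0 with hcol
  set dom : V → V := fun x => if h : x ∈ D then x else (hD x h).choose with hdomdef
  have hdom : ∀ x, (dom x ∈ D) ∧ (dom x = x ∨ G.Adj (dom x) x) := by
    intro x
    by_cases h : x ∈ D
    · simp [hdomdef, h]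
    · simp only [hdomdef, dif_neg h]
      exact ⟨(hD x h).choose_spec.1, Or.inr (hD x h).choose_spec.2⟩
  set f : V → V × ℕ := fun x => (dom x, col x) with hf
  have hcolx : ∀ x (hx : x ∈ X), col x = (C ⟨x, Finset.mem_coe.mpr hx⟩ : ℕ) := by
    intro x hx; simp [hcol, hx]
  have hnadj : ∀ x ∈ X, ∀ y ∈ X, col x = col y → ¬ G.Adj x y := by
    intro x hx y hy hc hadj
    have hxy : x ≠ y := G.ne_of_adj hadj
    have : (G.induce (X : Set V)).Adj ⟨x, Finset.mem_coe.mpr hx⟩ ⟨y, Finset.mem_coe.mpr hy⟩ := by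
      simpa using hadj
    have hval := C.valid this
    rw [hcolx x hx, hcolx y hy] at hc
    exact hval (Fin.val_injective hc)
  have key : X.card = ∑ p ∈ D ×ˢ Finset.range k, (X.filter (fun x => f x = p)).card := by
    apply Finset.card_eq_sum_card_fiberwise
    intro x hx
    rw [Finset.mem_coe, Finset.mem_product]
    refine ⟨(hdom x).1, ?_⟩
    show col x ∈ Finset.range k
    rw [Finset.mem_range, hcolx x hx]
    exact (C ⟨x, Finset.mem_coe.mpr hx⟩).is_lt
  have fiber_bound : ∀ p ∈ D ×ˢ Finset.range k,
      (X.filter (fun x => f x = p)).card ≤ r - 1 := by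
    rintro ⟨d, c⟩ _
    set S := X.filter (fun x => f x = (d, c)) with hS
    have hSX : ∀ x ∈ S, x ∈ X := fun x hx => (Finset.mem_filter.mp hx).1
    have hSd : ∀ x ∈ S, dom x = d := by
      intro x hx
      have := (Finset.mem_filter.mp hx).2
      exact (Prod.mk.injEq _ _ _ _ ▸ this).1
    have hSc : ∀ x ∈ S, col x = c := by
      intro x hx
      have := (Finset.mem_filter.mp hx).2
      exact (Prod.mk.injEq _ _ _ _ ▸ this).2
    have hSnadj : ∀ x ∈ S, ∀ y ∈ S, x ≠ y → ¬ G.Adj x y := by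
      intro x hx y hy _ hadj
      exact hnadj x (hSX x hx) y (hSX y hy) (by rw [hSc x hx, hSc y hy]) hadj
    have hadjd : ∀ x ∈ S, x ≠ d → G.Adj d x := by
      intro x hx hne
      rcases (hdom x).2 with h | h
      · exact absurd (h.symm.trans (hSd x hx)) hne
      · exact (hSd x hx) ▸ h
    by_cases hd : d ∈ S
    · have hsingle : S = {d} := by
        apply Finset.eq_singleton_iff_unique_mem.mpr
        refine ⟨hd, fun y hy => ?_⟩
        by_contra hne
        exact hSnadj d hd y hy (Ne.symm hne) (hadjd y hy hne)
      rw [hsingle, Finset.card_singleton]; omega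
    · by_contra hlt
      push_neg at hlt
      have hrS : r ≤ S.card := by omega
      obtain ⟨A, hAS, hAcard⟩ := Finset.exists_subset_card_eq hrS
      refine hG ⟨d, A, fun a ha => ?_, fun a ha b hb hab => hSnadj a (hAS ha) b (hAS hb) hab, hAcard⟩
      refine hadjd a (hAS ha) ?_
      rintro rfl; exact hd (hAS ha)
  calc X.card = ∑ p ∈ D ×ˢ Finset.range k, (X.filter (fun x => f x = p)).card := key
    _ ≤ ∑ _p ∈ D ×ˢ Finset.range k, (r - 1) := Finset.sum_le_sum fiber_bound
    _ = (D.card * k) * (r - 1) := by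
        rw [Finset.sum_const, smul_eq_mul, Finset.card_product, Finset.card_range]
    _ = (r - 1) * k * domNum G := by rw [hDcard]; ring
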